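/- arXiv:1501.03432 — 3 statements merged into one kernel-verified Lean document; each statement's English description precedes it below -/
import Mathlib

section
/- Let G be a graph on vertices {1,…,n} with nonnegative vertex weights w_i, and suppose that for every independent set I of G, ∑_{j∈I} w_j ≤ y. Then for every assignment p ∈ {0,1}^n, ∑_i w_i p_i − ∑_i w_i ∑_{j ∈ N(i)} p_i p_j ≤ y, where N(i) denotes the neighborhood of vertex i in G. -/
/-- Noncontextual bound of the SI-NC inequality: if every independent set of `G` has
weight at most `y`, then for every 0/1 assignment `p`,
`∑ i, w i * p i − ∑ i, w i * ∑_{j ∈ N(i)} p i * p j ≤ y`. -/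
theorem noncontextual_bound {n : ℕ} (G : SimpleGraph (Fin n)) [DecidableRel G.Adj]
    (w : Fin n → ℝ) (hw : ∀ i, 0 ≤ w i) (y : ℝ)
    (hI : ∀ I : Finset (Fin n), (∀ i ∈ I, ∀ j ∈ I, ¬ G.Adj i j) → ∑ j ∈ I, w j ≤ y)
    (p : Fin n → ℝ) (hp : ∀ i, p i = 0 ∨ p i = 1) :
    ∑ i, w i * p i - ∑ i, w i * ∑ j ∈ G.neighborFinset i, p i * p j ≤ y := by
  classical
  have hLHS : ∑ i, w i * p i - ∑ i, w i * ∑ j ∈ G.neighborFinset i, p i * p j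
      = ∑ i, w i * p i * (1 - ∑ j ∈ G.neighborFinset i, p j) := by
    rw [← Finset.sum_sub_distrib]
    refine Finset.sum_congr rfl fun i _ => ?_
    simp only [mul_sub, mul_one, Finset.mul_sum, mul_assoc]
  have hind : ∀ i ∈ Finset.univ.filter
      (fun i => p i = 1 ∧ ∀ j ∈ G.neighborFinset i, p j = 0),
      ∀ j ∈ Finset.univ.filter
      (fun i => p i = 1 ∧ ∀ j ∈ G.neighborFinset i, p j = 0), ¬ G.Adj i j := by
    intro i hi j hj hadj
    obtain ⟨-, -, hnb⟩ := Finset.mem_filter.mp hi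
    obtain ⟨-, hpj, -⟩ := Finset.mem_filter.mp hj
    have h0 := hnb j (by rwa [SimpleGraph.mem_neighborFinset])
    rw [hpj] at h0
    norm_num at h0
  have hsum : ∑ i, w i * p i * (1 - ∑ j ∈ G.neighborFinset i, p j)
      ≤ ∑ i ∈ Finset.univ.filter
        (fun i => p i = 1 ∧ ∀ j ∈ G.neighborFinset i, p j = 0), w i := by
    rw [← Finset.sum_filter_add_sum_filter_not Finset.univ
      (fun i => p i = 1 ∧ ∀ j ∈ G.neighborFinset i, p j = 0)]
    have h1 : ∑ i ∈ Finset.univ.filter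
        (fun i => p i = 1 ∧ ∀ j ∈ G.neighborFinset i, p j = 0),
        w i * p i * (1 - ∑ j ∈ G.neighborFinset i, p j)
        = ∑ i ∈ Finset.univ.filter
        (fun i => p i = 1 ∧ ∀ j ∈ G.neighborFinset i, p j = 0), w i := by
      refine Finset.sum_congr rfl fun i hi => ?_
      obtain ⟨-, hp1, hnb⟩ := Finset.mem_filter.mp hi
      have hz : ∑ j ∈ G.neighborFinset i, p j = 0 := Finset.sum_eq_zero hnb
      rw [hz, hp1]
      ring
    have h2 : ∑ i ∈ Finset.univ.filter
        (fun i => ¬ (p i = 1 ∧ ∀ j ∈ G.neighborFinset i, p j = 0)),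
        w i * p i * (1 - ∑ j ∈ G.neighborFinset i, p j) ≤ 0 := by
      refine Finset.sum_nonpos fun i hi => ?_
      obtain ⟨-, hni⟩ := Finset.mem_filter.mp hi
      rcases hp i with h | h
      · simp [h]
      · push_neg at hni
        obtain ⟨j, hj, hpj⟩ := hni h
        have hpj1 : p j = 1 := (hp j).resolve_left hpj
        have hge : (1 : ℝ) ≤ ∑ j ∈ G.neighborFinset i, p j := by
          calc (1:ℝ) = p j := hpj1.symm
          _ ≤ ∑ j ∈ G.neighborFinset i, p j :=
            Finset.single_le_sum (fun k _ => by rcases hp k with h'|h' <;> simp [h']) hj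
        apply mul_nonpos_of_nonneg_of_nonpos
        · exact mul_nonneg (hw i) (by rw [h]; norm_num)
        · linarith
    linarith [h1, h2]
  rw [hLHS]
  exact hsum.trans (hI _ hind)
end

section
/- Let Π_1, …, Π_n be rank-one projections on ℂ^d with orthogonality graph G (edge ij iff Π_iΠ_j = 0). Suppose there exist nonnegative weights w_i and 0 ≤ y < 1 such that ∑_{j∈I} w_j ≤ y for every independent set I of G and ∑_i w_i Π_i ≥ 𝟙. Then for every density operator ρ, ∑_i w_i tr(ρΠ_i) − ∑_i w_i ∑_{j: Π_iΠ_j=0} tr(ρ Π_iΠ_j) ≥ 1 > y; i.e., the quantum value of the noncontextuality inequality exceeds its noncontextual bound y for every state. -/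
open Matrix
open scoped ComplexOrder Classical

lemma trace_mul_psd_re_nonneg {d : ℕ} {A B : Matrix (Fin d) (Fin d) ℂ}
    (hA : A.PosSemidef) (hB : B.PosSemidef) : 0 ≤ ((A * B).trace).re := by
  obtain ⟨X, rfl⟩ := (by open scoped MatrixOrder in exact (CStarAlgebra.nonneg_iff_eq_star_mul_self.mp hA.nonneg).imp fun X h => by rwa [Matrix.star_eq_conjTranspose] at h)
  obtain ⟨Y, rfl⟩ := (by open scoped MatrixOrder in exact (CStarAlgebra.nonneg_iff_eq_star_mul_self.mp hB.nonneg).imp fun X h => by rwa [Matrix.star_eq_conjTranspose] at h)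
  have h1 : (Xᴴ * X * (Yᴴ * Y)).trace = ((X * Yᴴ)ᴴ * (X * Yᴴ)).trace := by
    rw [Matrix.conjTranspose_mul, Matrix.conjTranspose_conjTranspose]
    rw [show Xᴴ * X * (Yᴴ * Y) = Xᴴ * (X * Yᴴ * Y) from by noncomm_ring,
      Matrix.trace_mul_comm,
      show X * Yᴴ * Y * Xᴴ = (X * Yᴴ) * (Y * Xᴴ) from by noncomm_ring,
      Matrix.trace_mul_comm]
  rw [h1]
  set M := X * Yᴴ with hM
  rw [Matrix.trace]
  simp only [Matrix.diag_apply, Matrix.mul_apply, Matrix.conjTranspose_apply]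
  rw [Complex.re_sum]
  refine Finset.sum_nonneg fun i _ => ?_
  rw [Complex.re_sum]
  refine Finset.sum_nonneg fun k _ => ?_
  rw [Complex.star_def, mul_comm, Complex.mul_conj]
  simp [Complex.normSq_nonneg]

/-- State-independent violation: if rank-one projections `P i` on `ℂ^d` admit nonnegative
weights `w` with `∑_{j ∈ I} w j ≤ y < 1` for every independent set `I` of the orthogonality
graph (`i ~ j` iff `P i * P j = 0`) and `∑ i, w i • P i ≥ 𝟙`, then for every density
operator `ρ` the quantum value of the NC inequality is at least `1 > y`. -/
theorem state_independent_violation {d n : ℕ} (P : Fin n → Matrix (Fin d) (Fin d) ℂ)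
    (hproj : ∀ i, (P i).IsHermitian ∧ P i * P i = P i ∧ (P i).rank = 1)
    (w : Fin n → ℝ) (hw : ∀ i, 0 ≤ w i) (y : ℝ) (hy0 : 0 ≤ y) (hy1 : y < 1)
    (hI : ∀ I : Finset (Fin n),
      (∀ i ∈ I, ∀ j ∈ I, i ≠ j → P i * P j ≠ 0) → ∑ j ∈ I, w j ≤ y)
    (hsum : (∑ i, (w i : ℂ) • P i - 1).PosSemidef)
    (ρ : Matrix (Fin d) (Fin d) ℂ) (hρ : ρ.PosSemidef) (htr : ρ.trace = 1) :
    1 ≤ ∑ i, w i * ((ρ * P i).trace).re -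
        ∑ i, w i * ∑ j ∈ Finset.univ.filter (fun j => P i * P j = 0),
          ((ρ * (P i * P j)).trace).re
      ∧ y < 1 := by
  refine ⟨?_, hy1⟩
  have hzero : ∀ i : Fin n, (∑ j ∈ Finset.univ.filter (fun j => P i * P j = 0),
      ((ρ * (P i * P j)).trace).re) = 0 := by
    intro i
    refine Finset.sum_eq_zero fun j hj => ?_
    rw [Finset.mem_filter] at hj
    rw [hj.2]
    simp
  simp only [hzero, mul_zero, Finset.sum_const_zero, sub_zero]
  have key := trace_mul_psd_re_nonneg hρ hsum
  have hexp : (ρ * (∑ i, (w i : ℂ) • P i - 1)).trace =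
      (∑ i, (w i : ℂ) * (ρ * P i).trace) - 1 := by
    rw [Matrix.mul_sub, Matrix.trace_sub, Matrix.mul_one, htr, Finset.mul_sum,
      Matrix.trace_sum]
    congr 1
    refine Finset.sum_congr rfl fun i _ => ?_
    rw [Matrix.mul_smul, Matrix.trace_smul]
    simp
  rw [hexp] at key
  have : ((∑ i, (w i : ℂ) * (ρ * P i).trace) - 1).re =
      (∑ i, w i * ((ρ * P i).trace).re) - 1 := by
    simp [Complex.sub_re, Complex.re_sum, Complex.re_ofReal_mul]
  rw [this] at key
  linarith
end

section
/- The 13 Yu–Oh vectors in ℝ³ realize their orthogonality graph: each listed orthogonality relation holds, and exactly those pairs are orthogonal; in particular, every maximal clique has size at most 3. -/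
open Matrix

/-- The 13 Yu–Oh vectors in `ℝ³`:
`y1± = (0,±1,1)`, `y2± = (±1,0,1)`, `y3± = (1,±1,0)`, `h0 = (1,1,1)`, `h1 = (-1,1,1)`,
`h2 = (1,-1,1)`, `h3 = (1,1,-1)`, `z1 = (1,0,0)`, `z2 = (0,1,0)`, `z3 = (0,0,1)`. -/
def yuOhVec : Fin 13 → (Fin 3 → ℝ) :=
  ![![0, 1, 1], ![0, -1, 1], ![1, 0, 1], ![-1, 0, 1], ![1, 1, 0], ![1, -1, 0],
    ![1, 1, 1], ![-1, 1, 1], ![1, -1, 1], ![1, 1, -1],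
    ![1, 0, 0], ![0, 1, 0], ![0, 0, 1]]

/-- The Yu–Oh graph: the orthogonality graph of the 13 Yu–Oh vectors. -/
def yuOhGraph : SimpleGraph (Fin 13) :=
  SimpleGraph.fromRel (fun i j => yuOhVec i ⬝ᵥ yuOhVec j = 0)

/-- The 24 orthogonal pairs among the Yu–Oh vectors. -/
def yuOhEdges : List (Fin 13 × Fin 13) :=
  [(0,1),(0,8),(0,9),(0,10),
   (1,6),(1,7),(1,10),
   (2,3),(2,7),(2,9),(2,11),
   (3,6),(3,8),(3,11),
   (4,5),(4,7),(4,8),(4,12),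
   (5,6),(5,9),(5,12),
   (10,11),(10,12),(11,12)]


set_option maxHeartbeats 2000000 in
lemma yuOh_key : ∀ i j : Fin 13, yuOhVec i ⬝ᵥ yuOhVec j = 0 ↔
    ((i, j) ∈ yuOhEdges ∨ (j, i) ∈ yuOhEdges) := by
  intro i j
  fin_cases i <;> fin_cases j <;>
    first
    | exact iff_of_true (by norm_num [yuOhVec, dotProduct, Fin.sum_univ_three, Matrix.cons_val_two, Matrix.tail_cons, Matrix.head_cons]) (by decide)
    | exact iff_of_false (by norm_num [yuOhVec, dotProduct, Fin.sum_univ_three, Matrix.cons_val_two, Matrix.tail_cons, Matrix.head_cons]) (by decide)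

lemma yuOhVec_self_ne (i : Fin 13) : yuOhVec i ⬝ᵥ yuOhVec i ≠ 0 := by
  fin_cases i <;> norm_num [yuOhVec, dotProduct, Fin.sum_univ_three, Matrix.cons_val_two, Matrix.tail_cons, Matrix.head_cons]

lemma yuOhVec_ne_zero (i : Fin 13) : yuOhVec i ≠ 0 := fun h =>
  yuOhVec_self_ne i (by rw [h]; simp)

lemma yuOh_part2 : ∀ S : Finset (Fin 13),
    (∀ i ∈ S, ∀ j ∈ S, i ≠ j → yuOhVec i ⬝ᵥ yuOhVec j = 0) → S.card ≤ 3 := by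
  intro S hS
  set v : S → EuclideanSpace ℝ (Fin 3) :=
    fun i => (WithLp.equiv 2 (Fin 3 → ℝ)).symm (yuOhVec i) with hv
  have hli : LinearIndependent ℝ v := by
    apply linearIndependent_of_ne_zero_of_inner_eq_zero
    · intro i h
      exact yuOhVec_ne_zero i
        ((WithLp.equiv 2 (Fin 3 → ℝ)).symm.injective (h.trans (by simp)))
    · intro i j hij
      have := hS j j.2 i i.2 (fun h => hij (Subtype.ext h.symm))
      simpa [hv, PiLp.inner_apply, RCLike.inner_apply, dotProduct] using this
  have := hli.fintype_card_le_finrank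
  simpa using this

/-- The Yu–Oh vectors realize their orthogonality graph: two of them are orthogonal
exactly when they form one of the 24 listed pairs; in particular every clique
(set of pairwise orthogonal vectors) has size at most 3. -/
theorem yuOh_realization :
    (∀ i j : Fin 13, yuOhVec i ⬝ᵥ yuOhVec j = 0 ↔
      ((i, j) ∈ yuOhEdges ∨ (j, i) ∈ yuOhEdges)) ∧
    (∀ S : Finset (Fin 13),
      (∀ i ∈ S, ∀ j ∈ S, i ≠ j → yuOhVec i ⬝ᵥ yuOhVec j = 0) → S.card ≤ 3) := by
  exact ⟨yuOh_key, yuOh_part2⟩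
end
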